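/- Let Σ ⊆ ℂ be compact and ε > 0. Then Q([Σ]_ε) = [Q(Σ)]_ε. -/

import Mathlib

open scoped ComplexConjugate
open Complex

noncomputable section

/-- Closed ε-neighbourhood `[Σ]_ε` of a set in `ℂ`. -/
def closedNbhd (S : Set ℂ) (ε : ℝ) : Set ℂ := {z | Metric.infDist z S ≤ ε}

/-- `Σ_z := {(λ − z)(conj λ − z) : λ ∈ Σ}`. -/
def sigmaSet (S : Set ℂ) (z : ℂ) : Set ℂ := (fun l => (l - z) * ((conj l) - z)) '' S

/-- `Q(Σ) := {z : 0 ∈ closed convex hull of Σ_z}`. -/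
def QSet (S : Set ℂ) : Set ℂ := {z | (0 : ℂ) ∈ closure (convexHull ℝ (sigmaSet S z))}

namespace Complex

/-- compatibility: the complex absolute value as an `AbsoluteValue`. -/
def abs : AbsoluteValue ℂ ℝ where
  toFun z := ‖z‖
  map_mul' := norm_mul
  nonneg' := norm_nonneg
  eq_zero' _ := norm_eq_zero
  add_le' := norm_add_le

theorem norm_eq_abs (z : ℂ) : ‖z‖ = abs z := rfl

theorem abs_ofReal (r : ℝ) : abs (r : ℂ) = |r| := by
  rw [← norm_eq_abs, Complex.norm_real, Real.norm_eq_abs]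

theorem sq_abs (z : ℂ) : abs z ^ 2 = normSq z := by
  rw [← norm_eq_abs, Complex.normSq_eq_norm_sq]

theorem normSq_eq_abs (z : ℂ) : normSq z = abs z ^ 2 := (sq_abs z).symm

theorem abs_re_le_abs (z : ℂ) : |z.re| ≤ abs z := Complex.abs_re_le_norm z

end Complex

namespace Stmt4Aux

/-- The "parabola lift" map. -/
def Lm (z : ℂ) : ℝ × ℝ := (z.re, Complex.normSq z)

lemma continuous_Lm : Continuous Lm :=
  Complex.continuous_re.prodMk Complex.continuous_normSq

/-- The affine map `(t,s) ↦ z² − 2tz + s`. -/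
def Az (z : ℂ) : (ℝ × ℝ) →ᵃ[ℝ] ℂ where
  toFun p := z ^ 2 - 2 * p.1 * z + p.2
  linear :=
    { toFun := fun p => (p.2 : ℂ) - 2 * p.1 * z
      map_add' := by
        intro p q
        simp only [Prod.fst_add, Prod.snd_add]
        push_cast
        ring
      map_smul' := by
        intro c p
        simp only [Prod.smul_fst, Prod.smul_snd, smul_eq_mul, RingHom.id_apply,
          Complex.real_smul]
        push_cast
        ring }
  map_vadd' := by
    intro p v
    simp only [LinearMap.coe_mk, AddHom.coe_mk, vadd_eq_add, Prod.fst_add, Prod.snd_add]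
    push_cast
    ring

lemma Az_apply (z : ℂ) (p : ℝ × ℝ) : Az z p = z ^ 2 - 2 * p.1 * z + p.2 := rfl

lemma continuous_Az (z : ℂ) : Continuous (Az z) :=
  (Az z).continuous_of_finiteDimensional

lemma sigma_eq (S : Set ℂ) (z : ℂ) : sigmaSet S z = Az z '' (Lm '' S) := by
  rw [Set.image_image]
  apply Set.image_congr'
  intro l
  rw [Az_apply]
  show (l - z) * ((conj l) - z) = _
  unfold Lm
  linear_combination (norm := (push_cast; ring1)) Complex.mul_conj l - z * Complex.add_conj l

lemma Az_Lm_self (z : ℂ) : Az z (Lm z) = 0 := by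
  rw [Az_apply]
  unfold Lm
  linear_combination (norm := (push_cast; ring1)) z * Complex.add_conj z - Complex.mul_conj z


lemma parab_closed : IsClosed {p : ℝ × ℝ | p.1 ^ 2 ≤ p.2} :=
  isClosed_le (by fun_prop) continuous_snd

lemma parab_convex : Convex ℝ {p : ℝ × ℝ | p.1 ^ 2 ≤ p.2} := by
  intro p hp q hq a b ha hb hab
  simp only [Set.mem_setOf_eq, Prod.fst_add, Prod.snd_add, Prod.smul_fst, Prod.smul_snd,
    smul_eq_mul] at *
  nlinarith [mul_nonneg (mul_nonneg ha hb) (sq_nonneg (p.1 - q.1)),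
    mul_le_mul_of_nonneg_left hp ha, mul_le_mul_of_nonneg_left hq hb]

lemma parab_mem {S : Set ℂ} {p : ℝ × ℝ}
    (hp : p ∈ closure (convexHull ℝ (Lm '' S))) : p.1 ^ 2 ≤ p.2 := by
  have h1 : Lm '' S ⊆ {p : ℝ × ℝ | p.1 ^ 2 ≤ p.2} := by
    rintro _ ⟨l, -, rfl⟩
    simp only [Lm, Set.mem_setOf_eq, Complex.normSq_apply]
    nlinarith [sq_nonneg l.im]
  exact closure_minimal (convexHull_min h1 parab_convex) parab_closed hp

lemma isBounded_Lm_image {S : Set ℂ} (hS : Bornology.IsBounded S) :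
    Bornology.IsBounded (Lm '' S) := by
  rw [isBounded_iff_forall_norm_le] at hS ⊢
  obtain ⟨C, hC⟩ := hS
  refine ⟨max C (C ^ 2), ?_⟩
  rintro _ ⟨l, hl, rfl⟩
  have h1 : ‖l‖ ≤ C := hC l hl
  have h0 : (0:ℝ) ≤ ‖l‖ := norm_nonneg l
  rw [Prod.norm_def]
  apply max_le
  · exact le_max_of_le_left ((Complex.abs_re_le_abs l).trans h1)
  · refine le_max_of_le_right ?_
    show ‖Complex.normSq l‖ ≤ C ^ 2
    rw [Real.norm_eq_abs, _root_.abs_of_nonneg (Complex.normSq_nonneg l), Complex.normSq_eq_abs]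
    exact pow_le_pow_left₀ h0 h1 2

/-- From membership of `Lm z` in the closed hull, conclude `z ∈ QSet S`. -/
lemma mem_QSet_of_mem_closure {S : Set ℂ} {z : ℂ}
    (h : Lm z ∈ closure (convexHull ℝ (Lm '' S))) : z ∈ QSet S := by
  show (0 : ℂ) ∈ closure (convexHull ℝ (sigmaSet S z))
  rw [sigma_eq, ← AffineMap.image_convexHull]
  have h0 : (0 : ℂ) ∈ Az z '' closure (convexHull ℝ (Lm '' S)) :=
    ⟨Lm z, h, Az_Lm_self z⟩
  exact image_closure_subset_closure_image (continuous_Az z) h0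

lemma Az_eq_zero_iff {z : ℂ} {p : ℝ × ℝ} (hp : p.1 ^ 2 ≤ p.2) :
    Az z p = 0 ↔ p = Lm z := by
  constructor
  · intro h
    rw [Az_apply, Complex.ext_iff] at h
    simp only [Complex.add_re, Complex.sub_re, Complex.ofReal_re, Complex.add_im,
      Complex.sub_im, Complex.ofReal_im, Complex.mul_re, Complex.mul_im, Complex.ofReal_im,
      Complex.zero_re, Complex.zero_im, Complex.re_ofNat, Complex.im_ofNat, pow_two] at h
    obtain ⟨hre, him⟩ := h
    have ht : p.1 = z.re := by
      rcases eq_or_ne z.im 0 with hy | hy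
      · have h2 : (p.1 - z.re) ^ 2 ≤ 0 := by nlinarith
        nlinarith [sq_nonneg (p.1 - z.re)]
      · have : 2 * z.im * (z.re - p.1) = 0 := by nlinarith
        rcases mul_eq_zero.1 this with h' | h'
        · exact absurd (by linarith) hy
        · linarith
    have hs : p.2 = Complex.normSq z := by
      rw [Complex.normSq_apply]; rw [ht] at hre; nlinarith
    exact Prod.ext ht hs
  · rintro rfl
    exact Az_Lm_self z

/-- The central characterisation: for bounded `S`,
`z ∈ QSet S ↔ Lm z ∈ closure (convexHull ℝ (Lm '' S))`. -/
lemma mem_QSet_iff {S : Set ℂ} (hS : Bornology.IsBounded S) (z : ℂ) :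
    z ∈ QSet S ↔ Lm z ∈ closure (convexHull ℝ (Lm '' S)) := by
  refine ⟨fun h => ?_, mem_QSet_of_mem_closure⟩
  have h' : (0 : ℂ) ∈ closure (Az z '' convexHull ℝ (Lm '' S)) := by
    rwa [AffineMap.image_convexHull, ← sigma_eq]
  obtain ⟨x, hx, hxlim⟩ := mem_closure_iff_seq_limit.1 h'
  choose q hq hAq using hx
  have hCb : Bornology.IsBounded (closure (convexHull ℝ (Lm '' S))) :=
    (isBounded_convexHull.2 (isBounded_Lm_image hS)).closure
  have hCcomp : IsCompact (closure (convexHull ℝ (Lm '' S))) :=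
    Metric.isCompact_of_isClosed_isBounded isClosed_closure hCb
  obtain ⟨q0, hq0, φ, hφ, hqlim⟩ :=
    hCcomp.tendsto_subseq (fun n => subset_closure (hq n))
  have h1 : Filter.Tendsto (fun k => Az z (q (φ k))) Filter.atTop (nhds (Az z q0)) :=
    ((continuous_Az z).tendsto q0).comp hqlim
  have h2 : Filter.Tendsto (fun k => Az z (q (φ k))) Filter.atTop (nhds 0) := by
    simp only [hAq]
    exact hxlim.comp hφ.tendsto_atTop
  have h3 : Az z q0 = 0 := tendsto_nhds_unique h1 h2
  have h4 : q0 = Lm z := (Az_eq_zero_iff (parab_mem hq0)).1 h3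
  rwa [← h4]


lemma sum_normSq_sub {ι : Type} (t : Finset ι) (c : ι → ℝ) (ν : ι → ℂ)
    (h1 : ∑ i ∈ t, c i = 1) :
    ∑ i ∈ t, c i * Complex.normSq (ν i - (((∑ j ∈ t, c j * (ν j).re : ℝ)) : ℂ)) =
      ∑ i ∈ t, c i * Complex.normSq (ν i) - (∑ j ∈ t, c j * (ν j).re) ^ 2 := by
  have key : ∀ i ∈ t, c i * Complex.normSq (ν i - (((∑ j ∈ t, c j * (ν j).re : ℝ)) : ℂ)) =
      c i * Complex.normSq (ν i) - 2 * (∑ j ∈ t, c j * (ν j).re) * (c i * (ν i).re) +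
        (∑ j ∈ t, c j * (ν j).re) ^ 2 * c i := by
    intro i _
    simp only [Complex.normSq_apply, Complex.sub_re, Complex.sub_im, Complex.ofReal_re,
      Complex.ofReal_im]
    ring
  rw [Finset.sum_congr rfl key, Finset.sum_add_distrib, Finset.sum_sub_distrib,
    ← Finset.mul_sum, ← Finset.mul_sum, h1]
  ring

/-- the weighted vector `(√cᵢ · f i)ᵢ` in Euclidean space. -/
def vec {ι : Type} (t : Finset ι) (c : ι → ℝ) (f : ι → ℂ) :
    EuclideanSpace ℂ {i // i ∈ t} :=
  WithLp.toLp 2 (fun i => ((Real.sqrt (c i) : ℝ) : ℂ) * f i)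

lemma vec_sub {ι : Type} (t : Finset ι) (c : ι → ℝ) (f g : ι → ℂ) :
    vec t c f - vec t c g = vec t c (fun i => f i - g i) := by
  ext i
  show vec t c f i - vec t c g i = _
  simp only [vec]
  ring

lemma vec_norm {ι : Type} (t : Finset ι) (c : ι → ℝ) (hc0 : ∀ i ∈ t, 0 ≤ c i) (f : ι → ℂ) :
    ‖vec t c f‖ = Real.sqrt (∑ i ∈ t, c i * Complex.normSq (f i)) := by
  rw [EuclideanSpace.norm_eq]
  congr 1
  rw [← Finset.sum_coe_sort t (fun i => c i * Complex.normSq (f i))]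
  refine Finset.sum_congr rfl fun i _ => ?_
  show ‖((Real.sqrt (c i) : ℝ) : ℂ) * f i‖ ^ 2 = _
  rw [norm_mul, mul_pow, Complex.norm_real, Real.norm_eq_abs,
    _root_.abs_of_nonneg (Real.sqrt_nonneg _), Real.sq_sqrt (hc0 i i.2),
    Complex.norm_eq_abs, Complex.sq_abs]

lemma combo_step {S : Set ℂ} (hS : IsCompact S) (hSne : S.Nonempty) {ε : ℝ} (hε : 0 ≤ ε)
    {q : ℝ × ℝ} (hq : q ∈ convexHull ℝ (Lm '' closedNbhd S ε)) {σ : ℝ}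
    (hσ : σ = 1 ∨ σ = -1) :
    ∃ w ∈ QSet S, dist (⟨q.1, σ * Real.sqrt (q.2 - q.1 ^ 2)⟩ : ℂ) w ≤ ε := by
  rw [convexHull_eq] at hq
  obtain ⟨ι, t, c, y, hc0, hc1, hyT, hcm⟩ := hq
  have hμ : ∀ i ∈ t, ∃ m : ℂ, m ∈ closedNbhd S ε ∧ Lm m = y i := fun i hi => hyT i hi
  choose! μ hμT hμL using hμ
  have hlam : ∀ i ∈ t, ∃ l, l ∈ S ∧ dist (μ i) l ≤ ε := by
    intro i hi
    obtain ⟨l, hl, hl'⟩ := hS.exists_infDist_eq_dist hSne (μ i)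
    exact ⟨l, hl, by rw [← hl']; exact hμT i hi⟩
  choose! lam hlamS hlamd using hlam
  have hcm' : ∑ i ∈ t, c i • y i = q := by
    rwa [Finset.centerMass_eq_of_sum_1 _ _ hc1] at hcm
  have hq1 : q.1 = ∑ i ∈ t, c i * (μ i).re := by
    rw [← hcm', Prod.fst_sum]
    refine Finset.sum_congr rfl fun i hi => ?_
    rw [← hμL i hi]
    simp [Lm, smul_eq_mul]
  have hq2 : q.2 = ∑ i ∈ t, c i * Complex.normSq (μ i) := by
    rw [← hcm', Prod.snd_sum]
    refine Finset.sum_congr rfl fun i hi => ?_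
    rw [← hμL i hi]
    simp [Lm, smul_eq_mul]
  set T0 : ℝ := ∑ i ∈ t, c i * (lam i).re with hT0
  set Vl : ℝ := ∑ i ∈ t, c i * Complex.normSq (lam i - (T0 : ℂ)) with hVl
  set Vm : ℝ := ∑ i ∈ t, c i * Complex.normSq (μ i - (q.1 : ℂ)) with hVm
  have hVl0 : 0 ≤ Vl :=
    Finset.sum_nonneg fun i hi => mul_nonneg (hc0 i hi) (Complex.normSq_nonneg _)
  have hVm0 : 0 ≤ Vm :=
    Finset.sum_nonneg fun i hi => mul_nonneg (hc0 i hi) (Complex.normSq_nonneg _)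
  have hVlid : Vl = ∑ i ∈ t, c i * Complex.normSq (lam i) - T0 ^ 2 := by
    rw [hVl, hT0]; exact sum_normSq_sub t c lam hc1
  have hVmid : Vm = ∑ i ∈ t, c i * Complex.normSq (μ i) - q.1 ^ 2 := by
    rw [hVm, hq1]; exact sum_normSq_sub t c μ hc1
  have hqpar : q.2 - q.1 ^ 2 = Vm := by rw [hVmid, hq2]
  have hσ2 : σ * σ = 1 := by rcases hσ with h | h <;> rw [h] <;> ring
  set w : ℂ := ⟨T0, σ * Real.sqrt Vl⟩ with hw
  have hwnorm : Complex.normSq w = T0 ^ 2 + Vl := by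
    have h1 : Real.sqrt Vl * Real.sqrt Vl = Vl := Real.mul_self_sqrt hVl0
    show T0 * T0 + (σ * Real.sqrt Vl) * (σ * Real.sqrt Vl) = T0 ^ 2 + Vl
    calc T0 * T0 + (σ * Real.sqrt Vl) * (σ * Real.sqrt Vl)
        = T0 ^ 2 + (σ * σ) * (Real.sqrt Vl * Real.sqrt Vl) := by ring
      _ = T0 ^ 2 + Vl := by rw [hσ2, h1, one_mul]
  have hwQ : w ∈ QSet S := by
    apply mem_QSet_of_mem_closure
    apply subset_closure
    have hmem : t.centerMass c (fun i => Lm (lam i)) ∈ convexHull ℝ (Lm '' S) :=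
      Finset.centerMass_mem_convexHull t hc0 (by rw [hc1]; exact one_pos)
        (fun i hi => Set.mem_image_of_mem _ (hlamS i hi))
    have heq : t.centerMass c (fun i => Lm (lam i)) = Lm w := by
      rw [Finset.centerMass_eq_of_sum_1 _ _ hc1]
      have e1 : (Lm w).1 = T0 := rfl
      have e2 : (Lm w).2 = T0 ^ 2 + Vl := hwnorm
      refine Prod.ext ?_ ?_
      · rw [e1, Prod.fst_sum, hT0]
        exact Finset.sum_congr rfl fun i hi => by simp [Lm, smul_eq_mul]
      · rw [e2, Prod.snd_sum]
        rw [hVlid]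
        have : ∑ i ∈ t, (c i • Lm (lam i)).2 = ∑ i ∈ t, c i * Complex.normSq (lam i) :=
          Finset.sum_congr rfl fun i hi => by simp [Lm, smul_eq_mul]
        rw [this]; ring
    rwa [heq] at hmem
  refine ⟨w, hwQ, ?_⟩
  -- distance estimate
  have hnL : ‖vec t c (fun i => lam i - (T0 : ℂ))‖ = Real.sqrt Vl := by
    rw [vec_norm t c hc0, hVl]
  have hnM : ‖vec t c (fun i => μ i - (q.1 : ℂ))‖ = Real.sqrt Vm := by
    rw [vec_norm t c hc0, hVm]
  have hTδ : q.1 - T0 = ∑ i ∈ t, c i * (μ i - lam i).re := by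
    rw [hq1, hT0, ← Finset.sum_sub_distrib]
    exact Finset.sum_congr rfl fun i hi => by simp [Complex.sub_re]; ring
  have hsubv : vec t c (fun i => μ i - (q.1 : ℂ)) - vec t c (fun i => lam i - (T0 : ℂ)) =
      vec t c (fun i => (μ i - lam i) - ((q.1 - T0 : ℝ) : ℂ)) := by
    rw [vec_sub]
    have harg : (fun i => μ i - (q.1 : ℂ) - (lam i - (T0 : ℂ))) =
        (fun i => (μ i - lam i) - ((q.1 - T0 : ℝ) : ℂ)) := by
      funext i; push_cast; ring
    rw [harg]
  have hsub : ‖vec t c (fun i => μ i - (q.1 : ℂ)) - vec t c (fun i => lam i - (T0 : ℂ))‖ ^ 2 =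
      ∑ i ∈ t, c i * Complex.normSq (μ i - lam i) - (q.1 - T0) ^ 2 := by
    rw [hsubv, vec_norm t c hc0]
    rw [Real.sq_sqrt (Finset.sum_nonneg fun i hi =>
      mul_nonneg (hc0 i hi) (Complex.normSq_nonneg _))]
    rw [hTδ]
    exact sum_normSq_sub t c (fun i => μ i - lam i) hc1
  have htri : |‖vec t c (fun i => μ i - (q.1 : ℂ))‖ - ‖vec t c (fun i => lam i - (T0 : ℂ))‖|
      ≤ ‖vec t c (fun i => μ i - (q.1 : ℂ)) - vec t c (fun i => lam i - (T0 : ℂ))‖ :=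
    abs_norm_sub_norm_le _ _
  have h5 : (Real.sqrt Vm - Real.sqrt Vl) ^ 2 ≤
      ‖vec t c (fun i => μ i - (q.1 : ℂ)) - vec t c (fun i => lam i - (T0 : ℂ))‖ ^ 2 := by
    rw [← hnM, ← hnL]
    exact sq_le_sq' (abs_le.1 htri).1 (abs_le.1 htri).2
  have h6 : ∑ i ∈ t, c i * Complex.normSq (μ i - lam i) ≤ ε ^ 2 := by
    have hstep : ∀ i ∈ t, c i * Complex.normSq (μ i - lam i) ≤ c i * ε ^ 2 := by
      intro i hi
      apply mul_le_mul_of_nonneg_left _ (hc0 i hi)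
      have hd : Complex.abs (μ i - lam i) ≤ ε := by
        rw [← Complex.norm_eq_abs, ← Complex.dist_eq]; exact hlamd i hi
      rw [Complex.normSq_eq_abs]
      exact pow_le_pow_left₀ (Complex.abs.nonneg _) hd 2
    calc ∑ i ∈ t, c i * Complex.normSq (μ i - lam i) ≤ ∑ i ∈ t, c i * ε ^ 2 :=
          Finset.sum_le_sum hstep
      _ = ε ^ 2 := by rw [← Finset.sum_mul, hc1, one_mul]
  have hd2 : dist (⟨q.1, σ * Real.sqrt (q.2 - q.1 ^ 2)⟩ : ℂ) w ^ 2 =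
      (q.1 - T0) ^ 2 + (Real.sqrt Vm - Real.sqrt Vl) ^ 2 := by
    rw [Complex.dist_eq, Complex.norm_eq_abs, Complex.sq_abs, Complex.normSq_apply]
    show (q.1 - T0) * (q.1 - T0) +
      (σ * Real.sqrt (q.2 - q.1 ^ 2) - σ * Real.sqrt Vl) *
        (σ * Real.sqrt (q.2 - q.1 ^ 2) - σ * Real.sqrt Vl) = _
    rw [hqpar]
    calc (q.1 - T0) * (q.1 - T0) +
        (σ * Real.sqrt Vm - σ * Real.sqrt Vl) * (σ * Real.sqrt Vm - σ * Real.sqrt Vl)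
        = (q.1 - T0) ^ 2 + (σ * σ) * (Real.sqrt Vm - Real.sqrt Vl) ^ 2 := by ring
      _ = _ := by rw [hσ2, one_mul]
  have h7 : dist (⟨q.1, σ * Real.sqrt (q.2 - q.1 ^ 2)⟩ : ℂ) w ^ 2 ≤ ε ^ 2 := by
    rw [hd2]
    have := hsub
    linarith [h5, h6, hsub]
  nlinarith [dist_nonneg (x := (⟨q.1, σ * Real.sqrt (q.2 - q.1 ^ 2)⟩ : ℂ)) (y := w), hε, h7]


lemma isBounded_closedNbhd {S : Set ℂ} (hS : IsCompact S) (hSne : S.Nonempty) {ε : ℝ} :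
    Bornology.IsBounded (closedNbhd S ε) := by
  rw [isBounded_iff_forall_norm_le]
  obtain ⟨C, hC⟩ := isBounded_iff_forall_norm_le.1 hS.isBounded
  refine ⟨C + ε, fun x hx => ?_⟩
  obtain ⟨l, hl, hl'⟩ := hS.exists_infDist_eq_dist hSne x
  have hd : dist x l ≤ ε := by rw [← hl']; exact hx
  rw [dist_eq_norm] at hd
  calc ‖x‖ = ‖l + (x - l)‖ := by ring_nf
    _ ≤ ‖l‖ + ‖x - l‖ := norm_add_le _ _
    _ ≤ C + ε := add_le_add (hC l hl) hd

lemma dirA {S : Set ℂ} (hS : IsCompact S) (hSne : S.Nonempty) {ε : ℝ} (hε : 0 < ε) {z : ℂ}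
    (hz : z ∈ QSet (closedNbhd S ε)) : Metric.infDist z (QSet S) ≤ ε := by
  have hTb := isBounded_closedNbhd hS hSne (ε := ε)
  have h1 : Lm z ∈ closure (convexHull ℝ (Lm '' closedNbhd S ε)) := (mem_QSet_iff hTb z).1 hz
  obtain ⟨x, hx, hxlim⟩ := mem_closure_iff_seq_limit.1 h1
  set σ : ℝ := if 0 ≤ z.im then 1 else -1 with hσdef
  have hσ : σ = 1 ∨ σ = -1 := by
    rw [hσdef]; split <;> simp
  set ζ : (ℝ × ℝ) → ℂ := fun q => ⟨q.1, σ * Real.sqrt (q.2 - q.1 ^ 2)⟩ with hζ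
  have hwn : ∀ n, ∃ w ∈ QSet S, dist (ζ (x n)) w ≤ ε := fun n =>
    combo_step hS hSne hε.le (hx n) hσ
  choose wseq hwQ hwd using hwn
  have hbound : ∀ n, Metric.infDist z (QSet S) ≤ dist z (ζ (x n)) + ε := by
    intro n
    calc Metric.infDist z (QSet S) ≤ dist z (wseq n) := Metric.infDist_le_dist_of_mem (hwQ n)
      _ ≤ dist z (ζ (x n)) + dist (ζ (x n)) (wseq n) := dist_triangle _ _ _
      _ ≤ dist z (ζ (x n)) + ε := by linarith [hwd n]
  have hcont : Continuous ζ := by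
    have hfm : ζ = fun q : ℝ × ℝ =>
        ((q.1 : ℂ) + (σ * Real.sqrt (q.2 - q.1 ^ 2) : ℝ) * Complex.I) := by
      funext q
      exact Complex.mk_eq_add_mul_I _ _
    rw [hfm]
    fun_prop
  have hζz : ζ (Lm z) = z := by
    rw [hζ]
    show (⟨z.re, σ * Real.sqrt (Complex.normSq z - z.re ^ 2)⟩ : ℂ) = z
    have h2 : Complex.normSq z - z.re ^ 2 = z.im ^ 2 := by
      rw [Complex.normSq_apply]; ring
    rw [h2]
    have h3 : σ * Real.sqrt (z.im ^ 2) = z.im := by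
      rw [Real.sqrt_sq_eq_abs, hσdef]
      rcases le_or_gt 0 z.im with h | h
      · rw [if_pos h, one_mul, _root_.abs_of_nonneg h]
      · rw [if_neg (not_le.2 h), _root_.abs_of_neg h]; ring
    rw [h3]
  have h4 : Filter.Tendsto (fun n => ζ (x n)) Filter.atTop (nhds z) := by
    rw [← hζz]
    exact (hcont.tendsto (Lm z)).comp hxlim
  have h5 : Filter.Tendsto (fun n => dist z (ζ (x n)) + ε) Filter.atTop
      (nhds (dist z z + ε)) := (tendsto_const_nhds.dist h4).add tendsto_const_nhds
  rw [dist_self, zero_add] at h5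
  exact ge_of_tendsto' h5 hbound


lemma normSq_sub_real (ζ : ℂ) (p : ℝ) :
    Complex.normSq (ζ - (p : ℂ)) = Complex.normSq ζ - 2 * p * ζ.re + p ^ 2 := by
  simp only [Complex.normSq_apply, Complex.sub_re, Complex.sub_im, Complex.ofReal_re,
    Complex.ofReal_im]
  ring

lemma halfspace_bound {S : Set ℂ} (hSb : Bornology.IsBounded S) {w : ℂ} (hw : w ∈ QSet S)
    (a' b' u' : ℝ) (h : ∀ l ∈ S, a' * l.re + b' * Complex.normSq l ≤ u') :
    a' * w.re + b' * Complex.normSq w ≤ u' := by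
  have h1 := (mem_QSet_iff hSb w).1 hw
  have hlin : IsLinearMap ℝ fun p : ℝ × ℝ => a' * p.1 + b' * p.2 := by
    constructor
    · intro p q; simp only [Prod.fst_add, Prod.snd_add]; ring
    · intro c p; simp only [Prod.smul_fst, Prod.smul_snd, smul_eq_mul]; ring
  have hsub : closure (convexHull ℝ (Lm '' S)) ⊆ {p : ℝ × ℝ | a' * p.1 + b' * p.2 ≤ u'} := by
    apply closure_minimal
    · apply convexHull_min
      · rintro _ ⟨l, hl, rfl⟩; exact h l hl
      · exact convex_halfSpace_le hlin u'
    · exact isClosed_le (by fun_prop) continuous_const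
  exact hsub h1

lemma exists_eta_plus (d : ℂ) {ε : ℝ} (hε : 0 ≤ ε) :
    ∃ η : ℂ, Complex.abs η ≤ ε ∧ Complex.abs (d + η) = Complex.abs d + ε := by
  by_cases hd : d = 0
  · exact ⟨(ε : ℂ), by rw [Complex.abs_ofReal, _root_.abs_of_nonneg hε],
      by rw [hd, zero_add, map_zero, zero_add, Complex.abs_ofReal, _root_.abs_of_nonneg hε]⟩
  · have hdp : 0 < Complex.abs d := Complex.abs.pos hd
    refine ⟨((ε / Complex.abs d : ℝ) : ℂ) * d, ?_, ?_⟩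
    · rw [map_mul, Complex.abs_ofReal,
        _root_.abs_of_nonneg (div_nonneg hε (Complex.abs.nonneg d)), div_mul_cancel₀ _ hdp.ne']
    · have h1 : d + ((ε / Complex.abs d : ℝ) : ℂ) * d =
          ((1 + ε / Complex.abs d : ℝ) : ℂ) * d := by push_cast; ring
      rw [h1, map_mul, Complex.abs_ofReal,
        _root_.abs_of_nonneg (by positivity : (0:ℝ) ≤ 1 + ε / Complex.abs d)]
      field_simp

lemma exists_eta_minus (d : ℂ) {ε : ℝ} (hε : 0 ≤ ε) (hde : ε ≤ Complex.abs d) :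
    ∃ η : ℂ, Complex.abs η ≤ ε ∧ Complex.abs (d + η) = Complex.abs d - ε := by
  by_cases hd : d = 0
  · rw [hd] at hde ⊢
    rw [map_zero] at hde
    have hε0 : ε = 0 := le_antisymm hde hε
    exact ⟨0, by rw [map_zero]; exact hε, by rw [add_zero, map_zero, hε0, sub_zero]⟩
  · have hdp : 0 < Complex.abs d := Complex.abs.pos hd
    refine ⟨((-(ε / Complex.abs d) : ℝ) : ℂ) * d, ?_, ?_⟩
    · rw [map_mul, Complex.abs_ofReal, abs_neg,
        _root_.abs_of_nonneg (div_nonneg hε (Complex.abs.nonneg d)), div_mul_cancel₀ _ hdp.ne']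
    · have h1 : d + ((-(ε / Complex.abs d) : ℝ) : ℂ) * d =
          ((1 - ε / Complex.abs d : ℝ) : ℂ) * d := by push_cast; ring
      have h2 : (0:ℝ) ≤ 1 - ε / Complex.abs d := by
        rw [sub_nonneg, div_le_one hdp]; exact hde
      rw [h1, map_mul, Complex.abs_ofReal, _root_.abs_of_nonneg h2]
      field_simp

lemma dirB {S : Set ℂ} (hS : IsCompact S) (hSne : S.Nonempty) {ε : ℝ} (hε : 0 < ε) {z : ℂ}
    (hz : Metric.infDist z (QSet S) ≤ ε) : z ∈ QSet (closedNbhd S ε) := by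
  have hSb := hS.isBounded
  have hTb := isBounded_closedNbhd hS hSne (ε := ε)
  have hQclosed : IsClosed (QSet S) := by
    have he : QSet S = Lm ⁻¹' closure (convexHull ℝ (Lm '' S)) :=
      Set.ext fun z => mem_QSet_iff hSb z
    rw [he]; exact isClosed_closure.preimage continuous_Lm
  have hQne : (QSet S).Nonempty := by
    obtain ⟨l0, hl0⟩ := hSne
    exact ⟨l0, mem_QSet_of_mem_closure
      (subset_closure (subset_convexHull ℝ _ (Set.mem_image_of_mem _ hl0)))⟩
  obtain ⟨w, hwQ, hwd⟩ := hQclosed.exists_infDist_eq_dist hQne z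
  have hzw : Complex.abs (z - w) ≤ ε := by
    rw [← Complex.norm_eq_abs, ← Complex.dist_eq, ← hwd]; exact hz
  have hmemT : ∀ l ∈ S, ∀ η : ℂ, Complex.abs η ≤ ε → l + η ∈ closedNbhd S ε := by
    intro l hl η hη
    show Metric.infDist (l + η) S ≤ ε
    calc Metric.infDist (l + η) S ≤ dist (l + η) l := Metric.infDist_le_dist_of_mem hl
      _ = Complex.abs η := by rw [Complex.dist_eq, add_sub_cancel_left, Complex.norm_eq_abs]
      _ ≤ ε := hη
  rw [mem_QSet_iff hTb]
  by_contra hc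
  obtain ⟨f, u, hfu, hzu⟩ := geometric_hahn_banach_closed_point
    ((convex_convexHull ℝ _).closure) isClosed_closure hc
  set a := f (1, 0) with ha
  set b := f (0, 1) with hbdef
  have hf : ∀ p : ℝ × ℝ, f p = a * p.1 + b * p.2 := by
    intro p
    have hp : p = p.1 • ((1:ℝ), (0:ℝ)) + p.2 • ((0:ℝ), (1:ℝ)) := by
      ext <;> simp
    rw [hp, map_add, map_smul, map_smul, smul_eq_mul, smul_eq_mul]
    simp only [Prod.fst_add, Prod.snd_add, Prod.smul_fst, Prod.smul_snd, smul_eq_mul,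
      mul_one, mul_zero, add_zero, zero_add, ← ha, ← hbdef]
    ring
  have H1 : ∀ μ ∈ closedNbhd S ε, a * μ.re + b * Complex.normSq μ < u := by
    intro μ hμ
    have h2 := hfu (Lm μ) (subset_closure (subset_convexHull ℝ _ (Set.mem_image_of_mem _ hμ)))
    rw [hf] at h2
    simpa only [Lm] using h2
  have HT : ∀ l ∈ S, ∀ η : ℂ, Complex.abs η ≤ ε →
      a * (l + η).re + b * Complex.normSq (l + η) < u := fun l hl η hη =>
    H1 _ (hmemT l hl η hη)
  have Hz : u < a * z.re + b * Complex.normSq z := by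
    have h2 := hzu
    rw [hf] at h2
    simpa only [Lm] using h2
  rcases lt_trichotomy b 0 with hb | hb | hb
  · -- b < 0
    have hbne : b ≠ 0 := ne_of_lt hb
    set p : ℝ := -a / (2 * b) with hp
    have h2bp : 2 * b * p = -a := by rw [hp]; field_simp
    have phi_id : ∀ ζ : ℂ, a * ζ.re + b * Complex.normSq ζ
        = b * Complex.normSq (ζ - (p : ℂ)) - b * p ^ 2 := by
      intro ζ
      rw [normSq_sub_real]
      linear_combination ζ.re * h2bp
    set C : ℝ := u + b * p ^ 2 with hC
    rcases lt_or_ge 0 C with hC0 | hC0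
    · -- C > 0 : direct contradiction
      have h10 : a * z.re + b * Complex.normSq z < u := by
        rw [phi_id]
        nlinarith [Complex.normSq_nonneg (z - (p : ℂ))]
      linarith
    · -- C ≤ 0
      have hD0 : 0 ≤ C / b := by rw [le_div_iff_of_neg hb, zero_mul]; exact hC0
      have H2 : ∀ l ∈ S, ∀ η : ℂ, Complex.abs η ≤ ε →
          C / b < Complex.normSq (l - (p : ℂ) + η) := by
        intro l hl η hη
        have h3 := HT l hl η hη
        rw [phi_id] at h3
        have h4 : (l + η - (p : ℂ)) = (l - (p : ℂ)) + η := by ring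
        rw [h4] at h3
        have h5 : b * Complex.normSq (l - (p : ℂ) + η) < C := by linarith
        rw [div_lt_iff_of_neg hb]
        linarith [mul_comm b (Complex.normSq (l - (p : ℂ) + η))]
      have hfar : ∀ l ∈ S, ε ≤ Complex.abs (l - (p : ℂ)) := by
        intro l hl
        by_contra hcon
        push_neg at hcon
        have h6 := H2 l hl (-(l - (p : ℂ))) (by rw [Complex.abs.map_neg]; exact hcon.le)
        rw [add_neg_cancel, map_zero] at h6
        linarith
      have H3 : ∀ l ∈ S, Real.sqrt (C / b) + ε ≤ Complex.abs (l - (p : ℂ)) := by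
        intro l hl
        obtain ⟨η, hη, hηe⟩ := exists_eta_minus (l - (p : ℂ)) hε.le (hfar l hl)
        have h6 := H2 l hl η hη
        rw [Complex.normSq_eq_abs, hηe] at h6
        have h8 : C / b ≤ (Complex.abs (l - (p : ℂ)) - ε) ^ 2 := h6.le
        have h9 := Real.sqrt_le_sqrt h8
        rw [Real.sqrt_sq (by linarith [hfar l hl])] at h9
        linarith
      have hhyp : ∀ l ∈ S, 2 * p * l.re + (-1) * Complex.normSq l ≤
          p ^ 2 - (Real.sqrt (C / b) + ε) ^ 2 := by
        intro l hl
        have h10 : (Real.sqrt (C / b) + ε) ^ 2 ≤ Complex.normSq (l - (p : ℂ)) := by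
          rw [Complex.normSq_eq_abs]
          exact pow_le_pow_left₀ (by positivity) (H3 l hl) 2
        rw [normSq_sub_real] at h10
        linarith
      have hwb := halfspace_bound hSb hwQ (2 * p) (-1)
          (p ^ 2 - (Real.sqrt (C / b) + ε) ^ 2) hhyp
      have hwnsq : (Real.sqrt (C / b) + ε) ^ 2 ≤ Complex.normSq (w - (p : ℂ)) := by
        rw [normSq_sub_real]
        linarith
      have hwabs : Real.sqrt (C / b) + ε ≤ Complex.abs (w - (p : ℂ)) := by
        rw [Complex.normSq_eq_abs] at hwnsq
        nlinarith [Complex.abs.nonneg (w - (p : ℂ)), Real.sqrt_nonneg (C / b), hε]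
      have hzabs : Real.sqrt (C / b) ≤ Complex.abs (z - (p : ℂ)) := by
        have htr : Complex.abs (w - (p : ℂ)) ≤ Complex.abs (z - (p : ℂ)) +
            Complex.abs (z - w) := by
          have he : w - (p : ℂ) = (z - (p : ℂ)) - (z - w) := by ring
          rw [he, ← Complex.norm_eq_abs, ← Complex.norm_eq_abs, ← Complex.norm_eq_abs]
          exact norm_sub_le _ _
        linarith
      have hzfinal : a * z.re + b * Complex.normSq z ≤ u := by
        rw [phi_id]
        have h11 : C / b ≤ Complex.normSq (z - (p : ℂ)) := by
          rw [Complex.normSq_eq_abs]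
          calc C / b = Real.sqrt (C / b) ^ 2 := (Real.sq_sqrt hD0).symm
            _ ≤ _ := pow_le_pow_left₀ (Real.sqrt_nonneg _) hzabs 2
        have h12 : b * Complex.normSq (z - (p : ℂ)) ≤ C := by
          have h13 := mul_le_mul_of_nonpos_left h11 hb.le
          rwa [mul_div_cancel₀ _ hbne] at h13
        linarith
      linarith
  · -- b = 0
    have hbS : ∀ l ∈ S, a * l.re ≤ u - |a| * ε := by
      intro l hl
      rcases le_or_gt 0 a with hha | hha
      · have h2 := HT l hl ((ε : ℝ) : ℂ)
          (by rw [Complex.abs_ofReal, _root_.abs_of_nonneg hε.le])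
        rw [hb] at h2
        simp only [Complex.add_re, Complex.ofReal_re, zero_mul, add_zero] at h2
        rw [_root_.abs_of_nonneg hha]
        nlinarith
      · have h2 := HT l hl ((-ε : ℝ) : ℂ)
          (by rw [Complex.abs_ofReal, abs_neg, _root_.abs_of_nonneg hε.le])
        rw [hb] at h2
        simp only [Complex.add_re, Complex.ofReal_re, zero_mul, add_zero] at h2
        rw [_root_.abs_of_neg hha]
        nlinarith
    have hwb := halfspace_bound hSb hwQ a 0 (u - |a| * ε)
      (by intro l hl; rw [zero_mul, add_zero]; exact hbS l hl)
    rw [zero_mul, add_zero] at hwb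
    have h2 : a * (z - w).re ≤ |a| * ε := by
      calc a * (z - w).re ≤ |a * (z - w).re| := le_abs_self _
        _ = |a| * |(z - w).re| := abs_mul _ _
        _ ≤ |a| * ε := mul_le_mul_of_nonneg_left
            ((Complex.abs_re_le_abs _).trans hzw) (abs_nonneg a)
    have h3 : a * z.re = a * w.re + a * (z - w).re := by
      rw [Complex.sub_re]; ring
    rw [hb] at Hz
    rw [zero_mul, add_zero] at Hz
    linarith
  · -- b > 0
    have hbne : b ≠ 0 := ne_of_gt hb
    set p : ℝ := -a / (2 * b) with hp
    have h2bp : 2 * b * p = -a := by rw [hp]; field_simp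
    have phi_id : ∀ ζ : ℂ, a * ζ.re + b * Complex.normSq ζ
        = b * Complex.normSq (ζ - (p : ℂ)) - b * p ^ 2 := by
      intro ζ
      rw [normSq_sub_real]
      linear_combination ζ.re * h2bp
    set C : ℝ := u + b * p ^ 2 with hC
    have H2 : ∀ l ∈ S, b * (Complex.abs (l - (p : ℂ)) + ε) ^ 2 ≤ C := by
      intro l hl
      obtain ⟨η, hη, hηe⟩ := exists_eta_plus (l - (p : ℂ)) hε.le
      have h3 := HT l hl η hη
      rw [phi_id] at h3
      have h4 : (l + η - (p : ℂ)) = (l - (p : ℂ)) + η := by ring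
      rw [h4, Complex.normSq_eq_abs, hηe] at h3
      linarith
    obtain ⟨l0, hl0⟩ := hSne
    have hC0 : 0 < C := by
      have h5 := H2 l0 hl0
      have hx : 0 < Complex.abs (l0 - (p : ℂ)) + ε := by
        nlinarith [Complex.abs.nonneg (l0 - (p : ℂ))]
      exact lt_of_lt_of_le (mul_pos hb (pow_pos hx 2)) h5
    have hrS : ∀ l ∈ S, Complex.abs (l - (p : ℂ)) ≤ Real.sqrt (C / b) - ε := by
      intro l hl
      have h5 : (Complex.abs (l - (p : ℂ)) + ε) ^ 2 ≤ C / b := by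
        rw [le_div_iff₀ hb]
        linarith [H2 l hl]
      have h6 := Real.sqrt_le_sqrt h5
      rw [Real.sqrt_sq (by positivity)] at h6
      linarith
    have hhyp : ∀ l ∈ S, -2 * p * l.re + 1 * Complex.normSq l ≤
        (Real.sqrt (C / b) - ε) ^ 2 - p ^ 2 := by
      intro l hl
      have h7 : Complex.normSq (l - (p : ℂ)) ≤ (Real.sqrt (C / b) - ε) ^ 2 := by
        rw [Complex.normSq_eq_abs]
        exact pow_le_pow_left₀ (Complex.abs.nonneg _) (hrS l hl) 2
      rw [normSq_sub_real] at h7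
      linarith
    have hwb := halfspace_bound hSb hwQ (-2 * p) 1
        ((Real.sqrt (C / b) - ε) ^ 2 - p ^ 2) hhyp
    have hwnsq : Complex.normSq (w - (p : ℂ)) ≤ (Real.sqrt (C / b) - ε) ^ 2 := by
      rw [normSq_sub_real]
      linarith
    have hr0 : 0 ≤ Real.sqrt (C / b) - ε :=
      le_trans (Complex.abs.nonneg _) (hrS l0 hl0)
    have hwabs : Complex.abs (w - (p : ℂ)) ≤ Real.sqrt (C / b) - ε := by
      rw [Complex.normSq_eq_abs] at hwnsq
      nlinarith [Complex.abs.nonneg (w - (p : ℂ))]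
    have hzabs : Complex.abs (z - (p : ℂ)) ≤ Real.sqrt (C / b) := by
      have he : z - (p : ℂ) = (w - (p : ℂ)) + (z - w) := by ring
      rw [he, ← Complex.norm_eq_abs]
      calc ‖(w - (p : ℂ)) + (z - w)‖ ≤ ‖w - (p : ℂ)‖ + ‖z - w‖ := norm_add_le _ _
        _ ≤ (Real.sqrt (C / b) - ε) + ε := by
            rw [Complex.norm_eq_abs, Complex.norm_eq_abs]
            exact add_le_add hwabs hzw
        _ = Real.sqrt (C / b) := by ring
    have hzfinal : a * z.re + b * Complex.normSq z ≤ u := by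
      rw [phi_id]
      have h10 : Complex.normSq (z - (p : ℂ)) ≤ C / b := by
        rw [Complex.normSq_eq_abs]
        calc Complex.abs (z - (p : ℂ)) ^ 2 ≤ Real.sqrt (C / b) ^ 2 :=
              pow_le_pow_left₀ (Complex.abs.nonneg _) hzabs 2
          _ = C / b := Real.sq_sqrt (by positivity)
      have h11 : Complex.normSq (z - (p : ℂ)) * b ≤ C := (le_div_iff₀ hb).1 h10
      nlinarith
    linarith

end Stmt4Aux

open Stmt4Aux in
/-- Corollary 2.3 (first part): `Q([Σ]_ε) = [Q(Σ)]_ε` for compact `Σ` and `ε > 0`. -/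
theorem stmt4 (S : Set ℂ) (hS : IsCompact S) (ε : ℝ) (hε : 0 < ε) :
    QSet (closedNbhd S ε) = closedNbhd (QSet S) ε := by
  rcases Set.eq_empty_or_nonempty S with hSe | hSne
  · subst hSe
    have h1 : closedNbhd (∅ : Set ℂ) ε = Set.univ := by
      ext z
      simp [closedNbhd, Metric.infDist_empty, hε.le]
    have h2 : QSet (∅ : Set ℂ) = ∅ := by
      ext z
      simp [QSet, sigmaSet, Set.image_empty, convexHull_empty, closure_empty]
    have h3 : QSet (Set.univ : Set ℂ) = Set.univ := by
      ext z
      simp only [Set.mem_univ, iff_true]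
      show (0 : ℂ) ∈ closure (convexHull ℝ (sigmaSet Set.univ z))
      apply subset_closure
      apply subset_convexHull
      exact ⟨z, trivial, by show (z - z) * ((conj z) - z) = 0; ring⟩
    rw [h1, h3, h2, h1]
  · ext z
    constructor
    · intro hz
      show Metric.infDist z (QSet S) ≤ ε
      exact dirA hS hSne hε hz
    · intro hz
      exact dirB hS hSne hε hz

end
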